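/- Let K be a real symmetric positive semidefinite T×T matrix, γ > 0, and set Ψ = (K + γ I_T)^{−1}. Let Ξ be a real T×p matrix such that Ξᵀ Ψ Ξ is invertible, and let X₀ ∈ ℝ^T. For θ ∈ ℝ^p define ω(θ) = Ψ (X₀ − Ξ θ) and the cost J(θ) = ‖X₀ − Ξ θ − K ω(θ)‖₂² + γ · ω(θ)ᵀ K ω(θ). Then θ* = (Ξᵀ Ψ Ξ)^{−1} Ξᵀ Ψ X₀ is a global minimizer of J: J(θ*) ≤ J(θ) for all θ ∈ ℝ^p. (Closed-form solution of the reduced kernel-based identification problem in the affine-in-parameters case.) -/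

import Mathlib

open Matrix RealInnerProductSpace

/-- **Closed-form solution of the reduced kernel-based identification problem
(affine-in-parameters case).**
With `Ψ = (K + γ I)⁻¹`, `ω(θ) = Ψ (X₀ − Ξ θ)` and
`J(θ) = ‖X₀ − Ξ θ − K ω(θ)‖₂² + γ ω(θ)ᵀ K ω(θ)`, if `Ξᵀ Ψ Ξ` is invertible
then `θ* = (Ξᵀ Ψ Ξ)⁻¹ Ξᵀ Ψ X₀` is a global minimizer of `J`. -/
theorem reduced_identification_closed_form
    (T p : ℕ) (K : Matrix (Fin T) (Fin T) ℝ) (hK : K.PosSemidef)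
    (γ : ℝ) (hγ : 0 < γ)
    (Ψ : Matrix (Fin T) (Fin T) ℝ)
    (hΨ : Ψ = (K + γ • (1 : Matrix (Fin T) (Fin T) ℝ))⁻¹)
    (Ξ : Matrix (Fin T) (Fin p) ℝ)
    (hinv : IsUnit (Ξᵀ * Ψ * Ξ))
    (X₀ : EuclideanSpace ℝ (Fin T))
    (ω : EuclideanSpace ℝ (Fin p) → EuclideanSpace ℝ (Fin T))
    (hω : ∀ θ, ω θ = Matrix.toEuclideanLin Ψ (X₀ - Matrix.toEuclideanLin Ξ θ))
    (J : EuclideanSpace ℝ (Fin p) → ℝ)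
    (hJ : ∀ θ, J θ =
      ‖X₀ - Matrix.toEuclideanLin Ξ θ - Matrix.toEuclideanLin K (ω θ)‖ ^ 2
        + γ * ⟪ω θ, Matrix.toEuclideanLin K (ω θ)⟫)
    (θstar : EuclideanSpace ℝ (Fin p))
    (hθstar : θstar = Matrix.toEuclideanLin ((Ξᵀ * Ψ * Ξ)⁻¹ * Ξᵀ * Ψ) X₀) :
    ∀ θ : EuclideanSpace ℝ (Fin p), J θstar ≤ J θ := by
  classical
  intro θ
  set A : Matrix (Fin T) (Fin T) ℝ := K + γ • (1 : Matrix (Fin T) (Fin T) ℝ) with hA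
  have hγ1 : (γ • (1 : Matrix (Fin T) (Fin T) ℝ)).PosDef := by
    rw [Matrix.smul_one_eq_diagonal]
    exact Matrix.posDef_diagonal_iff.2 fun _ => hγ
  have hApd : A.PosDef := Matrix.PosDef.posSemidef_add hK hγ1
  have hAdet : IsUnit A.det := isUnit_iff_ne_zero.2 hApd.det_pos.ne'
  have hΨpd : Ψ.PosDef := hΨ ▸ hApd.inv
  have hAΨ : A * Ψ = 1 := by rw [hΨ]; exact Matrix.mul_nonsing_inv _ hAdet
  have hΨsymm : Ψᵀ = Ψ := by
    have := hΨpd.isHermitian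
    simpa [Matrix.IsHermitian] using this
  set x0 : Fin T → ℝ := WithLp.equiv 2 (Fin T → ℝ) X₀ with hx0
  have hIP : ∀ x y : EuclideanSpace ℝ (Fin T),
      ⟪x, y⟫ = WithLp.equiv 2 (Fin T → ℝ) x ⬝ᵥ WithLp.equiv 2 (Fin T → ℝ) y := by
    intro x y
    simp only [PiLp.inner_apply, RCLike.inner_apply, starRingEnd_apply, star_trivial,
      dotProduct]
    exact Finset.sum_congr rfl fun _ _ => mul_comm _ _
  have hN : ∀ x : EuclideanSpace ℝ (Fin T),
      ‖x‖ ^ 2 = WithLp.equiv 2 (Fin T → ℝ) x ⬝ᵥ WithLp.equiv 2 (Fin T → ℝ) x := by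
    intro x
    rw [← real_inner_self_eq_norm_sq, hIP]
  set r : EuclideanSpace ℝ (Fin p) → (Fin T → ℝ) :=
    fun t => x0 - Ξ *ᵥ WithLp.equiv 2 (Fin p → ℝ) t with hr
  have her : ∀ t, WithLp.equiv 2 (Fin T → ℝ) (X₀ - Matrix.toEuclideanLin Ξ t) = r t := by
    intro t
    rfl
  have heω : ∀ t, WithLp.equiv 2 (Fin T → ℝ) (ω t) = Ψ *ᵥ r t := by
    intro t
    rw [hω]
    exact congrArg (Ψ *ᵥ ·) (her t)
  have hKΨ : ∀ v : Fin T → ℝ, v - K *ᵥ (Ψ *ᵥ v) = γ • (Ψ *ᵥ v) := by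
    intro v
    have h1 : K * Ψ + γ • Ψ = 1 := by
      have := hAΨ
      rwa [hA, add_mul, Matrix.smul_mul, one_mul] at this
    have h2 : K *ᵥ (Ψ *ᵥ v) + γ • (Ψ *ᵥ v) = v := by
      have := congrArg (fun M => M *ᵥ v) h1
      simpa [Matrix.add_mulVec, Matrix.smul_mulVec, Matrix.one_mulVec,
        ← Matrix.mulVec_mulVec] using this
    nth_rewrite 1 [← h2]
    abel
  have hAv : ∀ v : Fin T → ℝ, γ • (Ψ *ᵥ v) + K *ᵥ (Ψ *ᵥ v) = v := by
    intro v
    have h0 : A *ᵥ (Ψ *ᵥ v) = v := by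
      have := congrArg (fun M => M *ᵥ v) hAΨ
      simpa [Matrix.one_mulVec, ← Matrix.mulVec_mulVec] using this
    calc γ • (Ψ *ᵥ v) + K *ᵥ (Ψ *ᵥ v) = A *ᵥ (Ψ *ᵥ v) := by
          rw [hA, Matrix.add_mulVec, Matrix.smul_mulVec, Matrix.one_mulVec]
          abel
      _ = v := h0
  have hJ2 : ∀ t, J t = γ * (r t ⬝ᵥ Ψ *ᵥ r t) := by
    intro t
    have h1 : WithLp.equiv 2 (Fin T → ℝ)
        (X₀ - Matrix.toEuclideanLin Ξ t - Matrix.toEuclideanLin K (ω t))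
        = γ • (Ψ *ᵥ r t) := by
      change WithLp.equiv 2 (Fin T → ℝ) (X₀ - Matrix.toEuclideanLin Ξ t)
        - K *ᵥ WithLp.equiv 2 (Fin T → ℝ) (ω t) = _
      rw [her, heω]
      exact hKΨ _
    have h2 : WithLp.equiv 2 (Fin T → ℝ) (Matrix.toEuclideanLin K (ω t))
        = K *ᵥ (Ψ *ᵥ r t) := by
      exact congrArg (K *ᵥ ·) (heω t)
    rw [hJ, hN, hIP, h1, h2, heω]
    have h3 : (γ • (Ψ *ᵥ r t)) ⬝ᵥ (γ • (Ψ *ᵥ r t)) + γ * ((Ψ *ᵥ r t) ⬝ᵥ K *ᵥ (Ψ *ᵥ r t))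
        = γ * ((Ψ *ᵥ r t) ⬝ᵥ (γ • (Ψ *ᵥ r t) + K *ᵥ (Ψ *ᵥ r t))) := by
      rw [dotProduct_add, smul_dotProduct, dotProduct_smul]
      simp only [smul_eq_mul]
      try ring
    rw [h3, hAv]
    rw [dotProduct_comm, Matrix.dotProduct_mulVec, ← Matrix.mulVec_transpose, hΨsymm]
    try rw [dotProduct_comm, Matrix.dotProduct_mulVec, ← Matrix.mulVec_transpose, hΨsymm]
  -- normal equations
  have hBdet : IsUnit (Ξᵀ * Ψ * Ξ).det := (Matrix.isUnit_iff_isUnit_det _).1 hinv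
  have hfθs : WithLp.equiv 2 (Fin p → ℝ) θstar = ((Ξᵀ * Ψ * Ξ)⁻¹ * Ξᵀ * Ψ) *ᵥ x0 := by
    rw [hθstar]
    rfl
  have hnormal : (Ξᵀ * Ψ * Ξ) *ᵥ WithLp.equiv 2 (Fin p → ℝ) θstar = (Ξᵀ * Ψ) *ᵥ x0 := by
    have hmm : (Ξᵀ * Ψ * Ξ) * ((Ξᵀ * Ψ * Ξ)⁻¹ * Ξᵀ * Ψ) = Ξᵀ * Ψ := by
      simp only [← Matrix.mul_assoc]
      rw [Matrix.mul_nonsing_inv _ hBdet, Matrix.one_mul]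
    rw [hfθs, Matrix.mulVec_mulVec, hmm]
  have hXty : Ξᵀ *ᵥ (Ψ *ᵥ r θstar) = 0 := by
    have hsplit : Ξᵀ *ᵥ (Ψ *ᵥ r θstar)
        = (Ξᵀ * Ψ) *ᵥ x0 - (Ξᵀ * Ψ * Ξ) *ᵥ WithLp.equiv 2 (Fin p → ℝ) θstar := by
      rw [hr]
      simp only [Matrix.mulVec_sub, Matrix.mulVec_mulVec, Matrix.mul_assoc]
    rw [hsplit, hnormal, sub_self]
  have hcross : ∀ u : Fin p → ℝ, (Ξ *ᵥ u) ⬝ᵥ (Ψ *ᵥ r θstar) = 0 := by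
    intro u
    rw [dotProduct_comm, Matrix.dotProduct_mulVec, ← Matrix.mulVec_transpose,
      hXty, zero_dotProduct]
  -- decomposition
  set d : Fin p → ℝ := WithLp.equiv 2 (Fin p → ℝ) θstar - WithLp.equiv 2 (Fin p → ℝ) θ with hd
  have hrθ : r θ = r θstar + Ξ *ᵥ d := by
    rw [hr, hd]
    simp only [Matrix.mulVec_sub]
    abel
  have hquad : 0 ≤ (Ξ *ᵥ d) ⬝ᵥ Ψ *ᵥ (Ξ *ᵥ d) := by
    have := hΨpd.posSemidef.dotProduct_mulVec_nonneg (Ξ *ᵥ d)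
    simpa using this
  have hcross2 : (r θstar) ⬝ᵥ Ψ *ᵥ (Ξ *ᵥ d) = 0 := by
    rw [Matrix.dotProduct_mulVec, ← Matrix.mulVec_transpose, hΨsymm,
      dotProduct_comm]
    exact hcross d
  have hcross3 : (Ξ *ᵥ d) ⬝ᵥ Ψ *ᵥ (r θstar) = 0 := hcross d
  have hexpand : r θ ⬝ᵥ Ψ *ᵥ r θ
      = r θstar ⬝ᵥ Ψ *ᵥ r θstar + (Ξ *ᵥ d) ⬝ᵥ Ψ *ᵥ (Ξ *ᵥ d) := by
    rw [hrθ, Matrix.mulVec_add, add_dotProduct, dotProduct_add,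
      dotProduct_add, hcross2, hcross3]
    ring
  rw [hJ2, hJ2, hexpand]
  nlinarith [hquad, hγ.le]
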